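/- For every integer k ≥ 1, the space S_k = {p ∈ (P̃_k)³ : x·p(x) = 0 for all x ∈ ℝ³} has dimension k(k+2). -/

import Mathlib

open MeasureTheory

/-- Divergence of a vector field on ℝ³. -/
noncomputable def pdiv (v : (Fin 3 → ℝ) → (Fin 3 → ℝ)) (x : Fin 3 → ℝ) : ℝ :=
  ∑ i : Fin 3, fderiv ℝ (fun y => v y i) x (Pi.single i 1)

/-- Curl of a vector field on ℝ³. -/
noncomputable def pcurl (v : (Fin 3 → ℝ) → (Fin 3 → ℝ)) (x : Fin 3 → ℝ) : Fin 3 → ℝ :=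
  ![fderiv ℝ (fun y => v y 2) x (Pi.single 1 1) - fderiv ℝ (fun y => v y 1) x (Pi.single 2 1),
    fderiv ℝ (fun y => v y 0) x (Pi.single 2 1) - fderiv ℝ (fun y => v y 2) x (Pi.single 0 1),
    fderiv ℝ (fun y => v y 1) x (Pi.single 0 1) - fderiv ℝ (fun y => v y 0) x (Pi.single 1 1)]

/-- Gradient of a scalar field on ℝ³. -/
noncomputable def pgrad (p : (Fin 3 → ℝ) → ℝ) (x : Fin 3 → ℝ) : Fin 3 → ℝ :=
  fun i => fderiv ℝ p x (Pi.single i 1)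

/-- The Poincaré-type operator 𝔭: (𝔭u)(x) = (∫₀¹ t² u(tx) dt) x. -/
noncomputable def poin (u : (Fin 3 → ℝ) → ℝ) (x : Fin 3 → ℝ) : Fin 3 → ℝ :=
  (∫ t in (0:ℝ)..1, t ^ 2 * u (t • x)) • x

/-- `u` is a polynomial function of total degree at most `r` (P_r = {0} if r < 0). -/
def IsPolyDeg (r : ℤ) (u : (Fin 3 → ℝ) → ℝ) : Prop :=
  ∃ p : MvPolynomial (Fin 3) ℝ, (p = 0 ∨ (p.totalDegree : ℤ) ≤ r) ∧
    ∀ x, MvPolynomial.eval x p = u x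

/-- `v` is a vector field with polynomial components of total degree at most `r`. -/
def IsVecPolyDeg (r : ℤ) (v : (Fin 3 → ℝ) → (Fin 3 → ℝ)) : Prop :=
  ∀ i, IsPolyDeg r fun x => v x i

/-- `u` is a polynomial function. -/
def IsPolyFun (u : (Fin 3 → ℝ) → ℝ) : Prop :=
  ∃ p : MvPolynomial (Fin 3) ℝ, ∀ x, MvPolynomial.eval x p = u x

/-- Membership in S_k = {p ∈ (P̃_k)³ : x·p(x) = 0}. -/
def MemS (k : ℕ) (v : (Fin 3 → ℝ) → (Fin 3 → ℝ)) : Prop :=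
  (∀ i, ∃ p : MvPolynomial (Fin 3) ℝ, p.IsHomogeneous k ∧ ∀ x, MvPolynomial.eval x p = v x i) ∧
    ∀ x, ∑ i : Fin 3, x i * v x i = 0

/-- Membership in the first-family Nédélec space R_k = 𝐏_{k-1} ⊕ S_k. -/
def MemR (k : ℕ) (v : (Fin 3 → ℝ) → (Fin 3 → ℝ)) : Prop :=
  ∃ v₁ v₂, IsVecPolyDeg ((k : ℤ) - 1) v₁ ∧ MemS k v₂ ∧ v = v₁ + v₂

section Aux
open MvPolynomial

lemma degree_eq_sum_id (d : Fin 3 →₀ ℕ) : Finsupp.degree d = d.sum fun _ => id := rfl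

noncomputable def symEquiv (n : ℕ) :
    {d : Fin 3 →₀ ℕ // Finsupp.degree d = n} ≃ Sym (Fin 3) n where
  toFun d := ⟨Finsupp.toMultiset d.1, by
    rw [Finsupp.card_toMultiset, ← degree_eq_sum_id, d.2]⟩
  invFun m := ⟨Multiset.toFinsupp m.1, by
    rw [degree_eq_sum_id, Multiset.toFinsupp_sum_eq, m.2]⟩
  left_inv d := by ext : 1; simp
  right_inv m := by ext : 1; simp

lemma card_degree_set (n : ℕ) :
    Nat.card {d : Fin 3 →₀ ℕ // Finsupp.degree d = n} = (n + 2).choose n := by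
  rw [Nat.card_congr (symEquiv n), Nat.card_eq_fintype_card, Sym.card_sym_eq_choose]
  congr 1
  simp
  omega

noncomputable def homBasis (n : ℕ) :
    Module.Basis {d : Fin 3 →₀ ℕ // Finsupp.degree d = n} ℝ
      (homogeneousSubmodule (Fin 3) ℝ n) :=
  (MvPolynomial.basisRestrictSupport ℝ {d | Finsupp.degree d = n}).map
    (LinearEquiv.ofEq _ _ (homogeneousSubmodule_eq_finsupp_supported (Fin 3) ℝ n).symm)

noncomputable instance homFintype (n : ℕ) :
    Fintype {d : Fin 3 →₀ ℕ // Finsupp.degree d = n} :=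
  Fintype.ofEquiv _ (symEquiv n).symm

instance homFinDim (n : ℕ) :
    FiniteDimensional ℝ (homogeneousSubmodule (Fin 3) ℝ n) :=
  Module.Finite.of_basis (homBasis n)

lemma finrank_hom (n : ℕ) :
    Module.finrank ℝ (homogeneousSubmodule (Fin 3) ℝ n) = (n + 2).choose n := by
  rw [Module.finrank_eq_card_basis (homBasis n), ← Nat.card_eq_fintype_card, card_degree_set]

lemma two_mul_choose (n : ℕ) : 2 * (n + 2).choose n = (n + 1) * (n + 2) := by
  induction n with
  | zero => rfl
  | succ n ih =>
    have h1 : (n + 3).choose (n + 1) = (n + 2).choose n + (n + 2).choose (n + 1) :=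
      Nat.choose_succ_succ' (n + 2) n
    have h2 : (n + 2).choose (n + 1) = n + 2 := Nat.choose_succ_self_right (n + 1)
    have : 2 * (n + 1 + 2).choose (n + 1) = 2 * (n + 2).choose n + 2 * (n + 2) := by
      rw [show n + 1 + 2 = n + 3 from rfl, h1, h2]; ring
    rw [this, ih]; ring

noncomputable def LM (k : ℕ) :
    (Fin 3 → homogeneousSubmodule (Fin 3) ℝ k) →ₗ[ℝ] MvPolynomial (Fin 3) ℝ where
  toFun p := ∑ i, X i * (p i : MvPolynomial (Fin 3) ℝ)
  map_add' p q := by simp [mul_add, Finset.sum_add_distrib]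
  map_smul' c p := by simp [Finset.smul_sum, mul_smul_comm]

lemma range_LM (k : ℕ) :
    LinearMap.range (LM k) = homogeneousSubmodule (Fin 3) ℝ (k + 1) := by
  apply le_antisymm
  · rintro - ⟨p, rfl⟩
    simp only [LM, LinearMap.coe_mk, AddHom.coe_mk]
    apply Submodule.sum_mem
    intro i _
    rw [mem_homogeneousSubmodule, show k + 1 = 1 + k from by ring]
    exact (isHomogeneous_X ℝ i).mul (p i).2
  · intro q hq
    rw [mem_homogeneousSubmodule] at hq
    rw [q.as_sum]
    apply Submodule.sum_mem
    intro d hd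
    have hdeg : Finsupp.degree d = k + 1 := by
      rw [Finsupp.degree_eq_weight_one]; exact hq (MvPolynomial.mem_support_iff.mp hd)
    have hd0 : d ≠ 0 := by
      intro h; rw [h, map_zero] at hdeg; omega
    obtain ⟨i, hi⟩ := Finsupp.ne_iff.mp hd0
    simp only [Finsupp.coe_zero, Pi.zero_apply] at hi
    have hle : Finsupp.single i 1 ≤ d := by
      rw [Finsupp.single_le_iff]; omega
    set d' := d - Finsupp.single i 1 with hd'
    have hadd : Finsupp.single i 1 + d' = d := add_tsub_cancel_of_le hle
    have hdeg' : Finsupp.degree d' = k := by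
      have := congrArg Finsupp.degree hadd
      rw [Finsupp.degree_eq_weight_one] at this ⊢
      rw [map_add] at this
      have hs : (Finsupp.weight (fun _ : Fin 3 => (1:ℕ))) (Finsupp.single i 1) = 1 := by
        simp [Finsupp.weight_apply, Finsupp.sum_single_index]
      rw [Finsupp.degree_eq_weight_one] at hdeg
      omega
    refine ⟨Pi.single i ⟨monomial d' (coeff d q), ?_⟩, ?_⟩
    · exact isHomogeneous_monomial _ hdeg'
    · rw [LM, LinearMap.coe_mk, AddHom.coe_mk]
      rw [Finset.sum_eq_single i]
      · simp only [Pi.single_eq_same]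
        rw [X, monomial_mul, one_mul, hadd]
      · intro j _ hj
        simp [Pi.single_eq_of_ne hj]
      · simp

noncomputable def FM (k : ℕ) :
    (Fin 3 → homogeneousSubmodule (Fin 3) ℝ k) →ₗ[ℝ] ((Fin 3 → ℝ) → (Fin 3 → ℝ)) where
  toFun p := fun x i => eval x (p i : MvPolynomial (Fin 3) ℝ)
  map_add' p q := by funext x i; simp
  map_smul' c p := by funext x i; simp [smul_eval]

lemma FM_inj (k : ℕ) : Function.Injective (FM k) := by
  rw [← LinearMap.ker_eq_bot, eq_bot_iff]
  intro p hp
  simp only [LinearMap.mem_ker, FM, LinearMap.coe_mk, AddHom.coe_mk] at hp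
  have : ∀ i, (p i : MvPolynomial (Fin 3) ℝ) = 0 := by
    intro i
    apply MvPolynomial.funext
    intro x
    have := congrFun (congrFun hp x) i
    simpa using this
  simp only [Submodule.mem_bot]
  funext i
  exact Subtype.ext (this i)

lemma memS_eq (k : ℕ) :
    {v : (Fin 3 → ℝ) → (Fin 3 → ℝ) | MemS k v} =
      ↑(Submodule.map (FM k) (LinearMap.ker (LM k))) := by
  ext v
  constructor
  · rintro ⟨h1, h2⟩
    choose q hq hq' using h1
    refine ⟨fun i => ⟨q i, hq i⟩, ?_, ?_⟩
    · simp only [SetLike.mem_coe, LinearMap.mem_ker]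
      simp only [LM, LinearMap.coe_mk, AddHom.coe_mk]
      apply MvPolynomial.funext
      intro x
      simp only [map_sum, eval_mul, eval_X, map_zero]
      calc ∑ i, x i * eval x (q i) = ∑ i : Fin 3, x i * v x i := by
            simp_rw [fun i => hq' i x]
        _ = 0 := h2 x
    · funext x i
      exact hq' i x
  · rintro ⟨p, hp, rfl⟩
    rw [SetLike.mem_coe, LinearMap.mem_ker] at hp
    constructor
    · intro i
      exact ⟨(p i : MvPolynomial (Fin 3) ℝ), (p i).2, fun x => rfl⟩
    · intro x
      have := congrArg (eval x) hp
      simp only [LM, LinearMap.coe_mk, AddHom.coe_mk, map_sum, eval_mul, eval_X, map_zero] at this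
      simpa [FM] using this


open MvPolynomial

set_option synthInstance.maxHeartbeats 1000000 in
set_option maxHeartbeats 1000000 in
/-- dim S_k = k(k+2). -/
theorem stmt_10 (k : ℕ) (hk : 1 ≤ k) :
    Module.finrank ℝ ↥(Submodule.span ℝ {v : (Fin 3 → ℝ) → (Fin 3 → ℝ) | MemS k v}) =
      k * (k + 2) := by
  have e : (LinearMap.ker (LM k)) ≃ₗ[ℝ] (LinearMap.ker (LM k)).map (FM k) :=
    Submodule.equivMapOfInjective (FM k) (FM_inj k) (LinearMap.ker (LM k))
  have he : Module.finrank ℝ (LinearMap.ker (LM k)) =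
      Module.finrank ℝ ((LinearMap.ker (LM k)).map (FM k)) := LinearEquiv.finrank_eq e
  rw [memS_eq, Submodule.span_eq, ← he]
  have hrn := LinearMap.finrank_range_add_finrank_ker (LM k)
  rw [range_LM] at hrn
  have hdom : Module.finrank ℝ (Fin 3 → homogeneousSubmodule (Fin 3) ℝ k) =
      3 * (k + 2).choose k := by
    rw [Module.finrank_pi_fintype, finrank_hom]
    simp [Finset.card_univ]
  rw [hdom, finrank_hom] at hrn
  have h1 := two_mul_choose k
  have h2 := two_mul_choose (k + 1)
  rw [show k + 1 + 2 = k + 3 by ring, show k + 1 + 1 = k + 2 by ring] at h2 hrn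
  have key : 3 * ((k + 1) * (k + 2)) = 2 * (k * (k + 2)) + (k + 2) * (k + 3) := by ring
  omega

end Aux
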